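/- arXiv:1403.5827 — 2 statements merged into one kernel-verified Lean document; each statement's English description precedes it below -/
import Mathlib

section
/- For every integer n ≥ 2, the sum of L(n+s-2, s) over s from 0 to n-1, plus the diagonal value ((3n-4)/(2n-2))·binom(2n-2, n-2), equals L(2n-1, n-1) = ((3n-2)/(2n-1))·binom(2n-1, n-1). -/
/-- The Lucas triangle entry, with the convention `L(t,0) = 1`. -/
def lucas (t s : ℕ) : ℚ := if s = 0 then 1 else ((s : ℚ) + t) / t * (t.choose s : ℚ)

lemma lucas_eq (u v : ℕ) :
    lucas (u + 1) (v + 1) = ((u + 1).choose (v + 1) : ℚ) + (u.choose v : ℚ) := by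
  unfold lucas
  rw [if_neg (by omega)]
  have h : ((v + 1 : ℕ) : ℚ) * ((u + 1).choose (v + 1) : ℚ)
      = ((u + 1 : ℕ) : ℚ) * (u.choose v : ℚ) := by
    rw [← Nat.cast_mul, ← Nat.cast_mul]
    congr 1
    rw [mul_comm]
    rw [← Nat.add_one_mul_choose_eq]
  push_cast at h ⊢
  have hu : ((u : ℚ) + 1) ≠ 0 := by positivity
  field_simp
  ring_nf
  ring_nf at h
  linarith [h]

lemma hockey (m k : ℕ) :
    (∑ s ∈ Finset.range (k + 1), (m + s).choose s) = (m + k + 1).choose k := by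
  induction k with
  | zero => simp
  | succ k ih =>
      rw [Finset.sum_range_succ, ih,
        show m + (k + 1) = m + k + 1 from by omega]
      exact (Nat.choose_succ_succ (m + k + 1) k).symm

lemma pascal_final (k : ℕ) :
    (2*k+4).choose (k+2) + (2*k+3).choose (k+1) + ((2*k+4).choose (k+1) + (2*k+3).choose k)
      = (2*k+5).choose (k+2) + (2*k+4).choose (k+1) := by
  have h1 : (2*k+5).choose (k+2) = (2*k+4).choose (k+1) + (2*k+4).choose (k+2) :=
    Nat.choose_succ_succ (2*k+4) (k+1)
  have h2 : (2*k+4).choose (k+1) = (2*k+3).choose k + (2*k+3).choose (k+1) :=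
    Nat.choose_succ_succ (2*k+3) k
  omega

theorem D_triangle_row_sum (n : ℕ) (hn : 2 ≤ n) :
    (∑ s ∈ Finset.range n, lucas (n + s - 2) s) +
      (3 * (n : ℚ) - 4) / (2 * n - 2) * ((2 * n - 2).choose (n - 2) : ℚ) =
      (3 * (n : ℚ) - 2) / (2 * n - 1) * ((2 * n - 1).choose (n - 1) : ℚ) := by
  obtain ⟨m, rfl⟩ : ∃ m, n = m + 2 := ⟨n - 2, by omega⟩
  match m with
  | 0 =>
      norm_num [Finset.sum_range_succ, lucas]
  | k + 1 =>
      -- n = k + 3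
      have hsum : (∑ s ∈ Finset.range (k + 3), lucas (k + 1 + 2 + s - 2) s)
          = ((2*k+4).choose (k+2) : ℚ) + ((2*k+3).choose (k+1) : ℚ) := by
        rw [Finset.sum_range_succ']
        have h0 : lucas (k + 1 + 2 + 0 - 2) 0 = 1 := by simp [lucas]
        rw [h0]
        have hterm : ∀ s ∈ Finset.range (k + 2),
            lucas (k + 1 + 2 + (s + 1) - 2) (s + 1)
              = (((k + s + 2).choose (s + 1) : ℚ) + ((k + s + 1).choose s : ℚ)) := by
          intro s _
          have : k + 1 + 2 + (s + 1) - 2 = (k + s + 1) + 1 := by omega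
          rw [this, lucas_eq (k + s + 1) s]
        rw [Finset.sum_congr rfl hterm, Finset.sum_add_distrib]
        have hA : (∑ s ∈ Finset.range (k + 2), ((k + s + 1).choose s : ℚ))
            = ((2*k+3).choose (k+1) : ℚ) := by
          rw [← Nat.cast_sum]
          congr 1
          have h := hockey (k + 1) (k + 1)
          rw [show k + 1 + (k + 1) + 1 = 2*k+3 from by omega] at h
          rw [← h]
          apply Finset.sum_congr rfl; intro s _; congr 1; omega
        have hB : (∑ s ∈ Finset.range (k + 2), ((k + s + 2).choose (s + 1) : ℚ)) + 1
            = ((2*k+4).choose (k+2) : ℚ) := by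
          have hnat : (∑ s ∈ Finset.range (k + 3), (k + 1 + s).choose s)
              = (2*k+4).choose (k+2) := by
            have h := hockey (k + 1) (k + 2)
            rw [show k + 1 + (k + 2) + 1 = 2*k+4 from by omega] at h
            exact h
          rw [Finset.sum_range_succ'] at hnat
          simp only [Nat.add_zero, Nat.choose_zero_right] at hnat
          rw [← Nat.cast_sum]
          rw [show (1 : ℚ) = ((1 : ℕ) : ℚ) by norm_num, ← Nat.cast_add]
          rw [← hnat]
          congr 2
          apply Finset.sum_congr rfl; intro s _; congr 1; omega
        rw [hA]
        linarith [hB]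
      have hdiag : (3 * ((k + 1 + 2 : ℕ) : ℚ) - 4) / (2 * ((k + 1 + 2 : ℕ) : ℚ) - 2)
            * ((2 * (k + 1 + 2) - 2).choose (k + 1 + 2 - 2) : ℚ)
          = ((2*k+4).choose (k+1) : ℚ) + ((2*k+3).choose k : ℚ) := by
        have h1 : 2 * (k + 1 + 2) - 2 = (2*k+3) + 1 := by omega
        have h2 : k + 1 + 2 - 2 = k + 1 := by omega
        rw [h1, h2]
        have := lucas_eq (2*k+3) k
        unfold lucas at this
        rw [if_neg (by omega)] at this
        push_cast at this ⊢
        convert this using 2 <;> ring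
      have hrhs : (3 * ((k + 1 + 2 : ℕ) : ℚ) - 2) / (2 * ((k + 1 + 2 : ℕ) : ℚ) - 1)
            * ((2 * (k + 1 + 2) - 1).choose (k + 1 + 2 - 1) : ℚ)
          = ((2*k+5).choose (k+2) : ℚ) + ((2*k+4).choose (k+1) : ℚ) := by
        have h1 : 2 * (k + 1 + 2) - 1 = (2*k+4) + 1 := by omega
        have h2 : k + 1 + 2 - 1 = (k + 1) + 1 := by omega
        rw [h1, h2]
        have := lucas_eq (2*k+4) (k+1)
        unfold lucas at this
        rw [if_neg (by omega)] at this
        push_cast at this ⊢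
        convert this using 2 <;> ring
      rw [hsum, hdiag, hrhs]
      have := pascal_final k
      push_cast
      exact_mod_cast congrArg (Nat.cast : ℕ → ℚ) this
end

section
/- For every integer n ≥ 1, (1/(n+1))·binom(2n, n) + (3/(n+2))·binom(2n, n-1) = (1/(n+2))·binom(2n+2, n+1). -/
theorem a_A_n_sum (n : ℕ) (hn : 1 ≤ n) :
    1 / ((n : ℚ) + 1) * ((2 * n).choose n : ℚ) +
      3 / ((n : ℚ) + 2) * ((2 * n).choose (n - 1) : ℚ) =
      1 / ((n : ℚ) + 2) * ((2 * n + 2).choose (n + 1) : ℚ) := by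
  have hsymm : (2 * n).choose (n - 1) = (2 * n).choose (n + 1) := by
    have h : n + 1 ≤ 2 * n := by omega
    have := Nat.choose_symm h
    have hd : 2 * n - (n + 1) = n - 1 := by omega
    rw [hd] at this
    exact this
  have h1 : (2 * n).choose (n + 1) * (n + 1) = (2 * n).choose n * n := by
    have := Nat.choose_succ_right_eq (2 * n) n
    simpa [show 2 * n - n = n by omega] using this
  have hsymm2 : (2 * n + 1).choose n = (2 * n + 1).choose (n + 1) := by
    have h : n + 1 ≤ 2 * n + 1 := by omega
    have := Nat.choose_symm h
    have hd : 2 * n + 1 - (n + 1) = n := by omega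
    rw [hd] at this
    exact this
  have h2a : (2 * n + 1 + 1) * (2 * n + 1).choose n
      = (2 * n + 2).choose (n + 1) * (n + 1) := by
    have := Nat.add_one_mul_choose_eq (2 * n + 1) n
    simpa using this
  have h2b : (2 * n + 1) * (2 * n).choose n
      = (2 * n + 1).choose (n + 1) * (n + 1) := by
    have := Nat.add_one_mul_choose_eq (2 * n) n
    simpa using this
  -- rational versions
  have q1 : ((2 * n).choose (n - 1) : ℚ) * ((n : ℚ) + 1)
      = ((2 * n).choose n : ℚ) * n := by
    rw [hsymm]
    exact_mod_cast congrArg (Nat.cast : ℕ → ℚ) h1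
  have q2 : ((2 * n + 2).choose (n + 1) : ℚ) * (((n : ℚ) + 1) * ((n : ℚ) + 1))
      = ((2 * n).choose n : ℚ) * ((2 * (n : ℚ) + 1) * (2 * (n : ℚ) + 2)) := by
    have hn2 : (2 * n + 2).choose (n + 1) * ((n + 1) * (n + 1))
        = (2 * n).choose n * ((2 * n + 1) * (2 * n + 2)) := by
      rw [hsymm2] at h2a
      nlinarith [h2a, h2b]
    exact_mod_cast congrArg (Nat.cast : ℕ → ℚ) hn2
  have hne1 : (n : ℚ) + 1 ≠ 0 := by positivity
  have hne2 : (n : ℚ) + 2 ≠ 0 := by positivity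
  field_simp
  nlinarith [q1, q2, sq_nonneg ((n:ℚ)+1)]
end
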